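/- Let q be an irreducible kernel on {0,…,n-1} with positive reversible measure, F its equilibrium manifold, and for ρ, r ∈ [0,1]^n set F_{ij}(ρ;r) = [1_{ρ_i > r_i} - 1_{ρ_j > r_j}]·[c_{ji}(ρ) - c_{ij}(ρ)] with c_{ij}(ρ) = q(i,j)ρ_i(1-ρ_j). Define F̃(ρ) = ∫₀ⁿ Σ_{i,j} F_{ij}(ρ; ψ^{-1}(k)) dk, where ψ^{-1}(k) ∈ F is the equilibrium state with total density k. Then F̃(ρ) ≤ 0 for all ρ ∈ [0,1]^n, and F̃(ρ) = 0 if and only if ρ ∈ F. -/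

import Mathlib

open MeasureTheory

/-- Auxiliary chain inequality: if `r` satisfies the detailed balance equation for the
pair and `ri ≤ pi`, `pj ≤ rj`, with everything in `[0,1]`, then the current comparison
holds. -/
lemma edf_chain (qij qji ri rj pi pj : ℝ) (hqij : 0 ≤ qij) (hqji : 0 ≤ qji)
    (heq : ri * (1 - rj) * qij = rj * (1 - ri) * qji)
    (hri : 0 ≤ ri) (hrj : 0 ≤ rj) (hri1 : ri ≤ 1) (hrj1 : rj ≤ 1)
    (hpi : 0 ≤ pi) (hpj : 0 ≤ pj) (hpi1 : pi ≤ 1) (hpj1 : pj ≤ 1)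
    (h1 : ri ≤ pi) (h2 : pj ≤ rj) :
    qji * pj * (1 - pi) ≤ qij * pi * (1 - pj) := by
  have a1 : qji * (pj * (1 - pi)) ≤ qji * (rj * (1 - ri)) := by
    apply mul_le_mul_of_nonneg_left _ hqji
    apply mul_le_mul h2 (by linarith) (by linarith) hrj
  have a2 : qij * (ri * (1 - rj)) ≤ qij * (pi * (1 - pj)) := by
    apply mul_le_mul_of_nonneg_left _ hqij
    apply mul_le_mul h1 (by linarith) (by linarith) hpi
  nlinarith [a1, a2, heq]

theorem entropy_dissipation_functional (n : ℕ) (hn : 0 < n)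
    (q : Fin n → Fin n → ℝ) (hq : ∀ i j, 0 ≤ q i j)
    (hirr : ∀ i j : Fin n, Relation.ReflTransGen (fun a b => 0 < q a b) i j)
    (lam : Fin n → ℝ) (hlam : ∀ i, 0 < lam i)
    (hrev : ∀ i j, lam i * q i j = lam j * q j i)
    (Feq : Set (Fin n → ℝ))
    (hFeq : Feq = {σ | (∀ i, σ i ∈ Set.Icc (0:ℝ) 1) ∧
      ∀ i j, σ i * (1 - σ j) * q i j = σ j * (1 - σ i) * q j i})
    (ρt : ℝ → Fin n → ℝ)
    (hρt1 : ∀ k ∈ Set.Icc (0:ℝ) (n : ℝ), ρt k ∈ Feq ∧ ∑ i, ρt k i = k)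
    (hρt2 : ∀ i : Fin n, ContinuousOn (fun k => ρt k i) (Set.Icc 0 (n : ℝ)) ∧
      MonotoneOn (fun k => ρt k i) (Set.Icc 0 (n : ℝ)))
    (ρ : Fin n → ℝ) (hρ : ∀ i, ρ i ∈ Set.Icc (0:ℝ) 1) :
    let c : Fin n → Fin n → (Fin n → ℝ) → ℝ := fun i j σ => q i j * σ i * (1 - σ j)
    let Ft : ℝ := ∫ k in (0:ℝ)..(n : ℝ), ∑ i, ∑ j,
      (((if ρt k i < ρ i then (1:ℝ) else 0) - (if ρt k j < ρ j then (1:ℝ) else 0)) *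
        (c j i ρ - c i j ρ))
    Ft ≤ 0 ∧ (Ft = 0 ↔ ρ ∈ Feq) := by
  intro c Ft
  have hn0 : (0:ℝ) ≤ (n:ℝ) := by positivity
  have hc : ∀ i j (σ : Fin n → ℝ), c i j σ = q i j * σ i * (1 - σ j) := fun _ _ _ => rfl
  set d : Fin n → Fin n → ℝ := fun i j => c j i ρ - c i j ρ with hd
  set f : ℝ → ℝ := fun k => ∑ i, ∑ j,
      (((if ρt k i < ρ i then (1:ℝ) else 0) - (if ρt k j < ρ j then (1:ℝ) else 0)) * d i j)
    with hf
  have hFt : Ft = ∫ k in (0:ℝ)..(n:ℝ), f k := rfl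
  -- basic facts about equilibrium states
  have hIcc : ∀ k ∈ Set.Icc (0:ℝ) (n:ℝ), (∀ i, ρt k i ∈ Set.Icc (0:ℝ) 1) ∧
      ∀ i j, ρt k i * (1 - ρt k j) * q i j = ρt k j * (1 - ρt k i) * q j i := by
    intro k hk
    have := (hρt1 k hk).1
    rw [hFeq] at this
    exact this
  -- each summand is nonpositive
  have hterm : ∀ k ∈ Set.Icc (0:ℝ) (n:ℝ), ∀ i j,
      (((if ρt k i < ρ i then (1:ℝ) else 0) - (if ρt k j < ρ j then (1:ℝ) else 0)) * d i j) ≤ 0 := by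
    intro k hk i j
    obtain ⟨hrIcc, hreq⟩ := hIcc k hk
    by_cases h1 : ρt k i < ρ i <;> by_cases h2 : ρt k j < ρ j <;> simp [h1, h2]
    · -- i-indicator 1, j-indicator 0 : need d i j ≤ 0, i.e. c j i ρ ≤ c i j ρ
      have := edf_chain (q i j) (q j i) (ρt k i) (ρt k j) (ρ i) (ρ j)
        (hq i j) (hq j i) (hreq i j)
        (hrIcc i).1 (hrIcc j).1 (hrIcc i).2 (hrIcc j).2
        (hρ i).1 (hρ j).1 (hρ i).2 (hρ j).2
        (le_of_lt h1) (not_lt.mp h2)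
      simp only [hd, hc]
      linarith
    · -- i-indicator 0, j-indicator 1 : need 0 ≤ d i j
      have := edf_chain (q j i) (q i j) (ρt k j) (ρt k i) (ρ j) (ρ i)
        (hq j i) (hq i j) (hreq j i)
        (hrIcc j).1 (hrIcc i).1 (hrIcc j).2 (hrIcc i).2
        (hρ j).1 (hρ i).1 (hρ j).2 (hρ i).2
        (le_of_lt h2) (not_lt.mp h1)
      simp only [hd, hc]
      linarith
  have hf_nonpos : ∀ k ∈ Set.Icc (0:ℝ) (n:ℝ), f k ≤ 0 := by
    intro k hk
    apply Finset.sum_nonpos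
    intro i _
    apply Finset.sum_nonpos
    intro j _
    exact hterm k hk i j
  -- integrability of f on (0, n]
  set S : Fin n → Set ℝ := fun i => {k | ρt k i < ρ i} ∩ Set.Ioc 0 (n:ℝ) with hS
  have hSmeas : ∀ i, MeasurableSet (S i) := by
    intro i
    set s := sSup (S i) with hs
    have hbdd : BddAbove (S i) := ⟨(n:ℝ), fun x hx => hx.2.2⟩
    have hsub1 : S i ⊆ Set.Ioc 0 s := fun x hx => ⟨hx.2.1, le_csSup hbdd hx⟩
    have hsub2 : Set.Ioo 0 s ⊆ S i := by
      intro x hx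
      have hne : (S i).Nonempty := by
        by_contra hemp
        rw [Set.not_nonempty_iff_eq_empty] at hemp
        rw [hemp] at hs
        rw [Real.sSup_empty] at hs
        rw [hs] at hx
        exact absurd hx.2 (not_lt.mpr (le_of_lt hx.1))
      obtain ⟨t, ht, hxt⟩ := exists_lt_of_lt_csSup hne hx.2
      have hxI : x ∈ Set.Icc (0:ℝ) (n:ℝ) := ⟨le_of_lt hx.1, le_trans (le_of_lt hxt) ht.2.2⟩
      have htI : t ∈ Set.Icc (0:ℝ) (n:ℝ) := ⟨le_of_lt ht.2.1, ht.2.2⟩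
      refine ⟨lt_of_le_of_lt ((hρt2 i).2 hxI htI (le_of_lt hxt)) ht.1, hx.1, hxI.2⟩
    have hrepr : S i = Set.Ioo 0 s ∪ (S i ∩ {s}) := by
      ext x
      constructor
      · intro hx
        rcases lt_or_eq_of_le (hsub1 hx).2 with h | h
        · exact Or.inl ⟨(hsub1 hx).1, h⟩
        · exact Or.inr ⟨hx, h⟩
      · rintro (hx | hx)
        · exact hsub2 hx
        · exact hx.1
    rw [hrepr]
    exact measurableSet_Ioo.union
      ((Set.subsingleton_singleton.anti Set.inter_subset_right).measurableSet)
  set g : ℝ → ℝ := fun k => ∑ i, ∑ j,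
      (((S i).indicator (fun _ => (1:ℝ)) k - (S j).indicator (fun _ => (1:ℝ)) k) * d i j)
    with hg
  have hgmeas : Measurable g := by
    apply Finset.measurable_sum
    intro i _
    apply Finset.measurable_sum
    intro j _
    exact (((measurable_const.indicator (hSmeas i)).sub
      (measurable_const.indicator (hSmeas j))).mul_const _)
  have hfg_ae : f =ᵐ[volume.restrict (Set.Ioc 0 (n:ℝ))] g := by
    have hall : ∀ k ∈ Set.Ioc (0:ℝ) (n:ℝ), f k = g k := by
      intro k hk
      have hind : ∀ i : Fin n, (if ρt k i < ρ i then (1:ℝ) else 0)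
          = (S i).indicator (fun _ => (1:ℝ)) k := by
        intro i
        by_cases h : ρt k i < ρ i
        · have hm : k ∈ S i := ⟨h, hk⟩
          rw [if_pos h, Set.indicator_of_mem hm]
        · rw [if_neg h, Set.indicator_of_notMem (fun hm => h hm.1)]
      simp only [hf, hg, hind]
    exact Filter.eventuallyEq_of_mem (self_mem_ae_restrict measurableSet_Ioc) hall
  have hfmeas : AEStronglyMeasurable f (volume.restrict (Set.Ioc 0 (n:ℝ))) :=
    hgmeas.aestronglyMeasurable.congr hfg_ae.symm
  set M : ℝ := ∑ i : Fin n, ∑ j : Fin n, |d i j| with hM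
  have habs : ∀ k, |f k| ≤ M := by
    intro k
    calc |f k| ≤ ∑ i : Fin n, |∑ j : Fin n,
        (((if ρt k i < ρ i then (1:ℝ) else 0) - (if ρt k j < ρ j then (1:ℝ) else 0)) * d i j)| :=
          Finset.abs_sum_le_sum_abs _ _
    _ ≤ M := by
        apply Finset.sum_le_sum
        intro i _
        calc |∑ j : Fin n, (((if ρt k i < ρ i then (1:ℝ) else 0)
              - (if ρt k j < ρ j then (1:ℝ) else 0)) * d i j)|
            ≤ ∑ j : Fin n, |(((if ρt k i < ρ i then (1:ℝ) else 0)
              - (if ρt k j < ρ j then (1:ℝ) else 0)) * d i j)| := Finset.abs_sum_le_sum_abs _ _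
        _ ≤ ∑ j : Fin n, |d i j| := by
            apply Finset.sum_le_sum
            intro j _
            rw [abs_mul]
            have h1 : |(if ρt k i < ρ i then (1:ℝ) else 0)
                - (if ρt k j < ρ j then (1:ℝ) else 0)| ≤ 1 := by
              by_cases h1 : ρt k i < ρ i <;> by_cases h2 : ρt k j < ρ j <;>
                simp [h1, h2]
            calc |(if ρt k i < ρ i then (1:ℝ) else 0)
                - (if ρt k j < ρ j then (1:ℝ) else 0)| * |d i j| ≤ 1 * |d i j| :=
                  mul_le_mul_of_nonneg_right h1 (abs_nonneg _)
            _ = |d i j| := one_mul _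
  have hfint : IntegrableOn f (Set.Ioc 0 (n:ℝ)) volume := by
    apply Integrable.mono' (integrable_const M) hfmeas
    exact Filter.Eventually.of_forall (fun k => by simpa [Real.norm_eq_abs] using habs k)
  have hfii : IntervalIntegrable f volume 0 (n:ℝ) :=
    (intervalIntegrable_iff_integrableOn_Ioc_of_le hn0).mpr hfint
  -- Part 1 : Ft ≤ 0
  have hFt_le : Ft ≤ 0 := by
    rw [hFt, intervalIntegral.integral_of_le hn0]
    exact setIntegral_nonpos measurableSet_Ioc
      (fun k hk => hf_nonpos k (Set.Ioc_subset_Icc_self hk))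
  refine ⟨hFt_le, ?_⟩
  constructor
  · -- Ft = 0 → ρ ∈ Feq
    intro hFt0
    by_contra hρF
    -- find a pair with strictly different currents
    have hne : ∃ a b : Fin n, c b a ρ < c a b ρ := by
      rw [hFeq] at hρF
      simp only [Set.mem_setOf_eq, not_and_or] at hρF
      rcases hρF with h | h
      · exact absurd hρ h
      · push_neg at h
        obtain ⟨a, b, hab⟩ := h
        have hcne : c a b ρ ≠ c b a ρ := by
          rw [hc, hc]
          intro h'
          exact hab (by linarith)
        rcases lt_or_gt_of_ne hcne with h' | h'
        · exact ⟨b, a, h'⟩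
        · exact ⟨a, b, h'⟩
    obtain ⟨a, b, hab⟩ := hne
    set δ : ℝ := c a b ρ - c b a ρ with hδ
    have hδpos : 0 < δ := by simp only [hδ]; linarith
    -- endpoints of the parametrization
    have h0mem : (0:ℝ) ∈ Set.Icc (0:ℝ) (n:ℝ) := ⟨le_refl _, hn0⟩
    have hnmem : (n:ℝ) ∈ Set.Icc (0:ℝ) (n:ℝ) := ⟨hn0, le_refl _⟩
    have hρt0 : ∀ i, ρt 0 i = 0 := by
      have hsum0 : ∑ i, ρt 0 i = 0 := (hρt1 0 h0mem).2
      have := (Finset.sum_eq_zero_iff_of_nonneg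
        (fun i _ => ((hIcc 0 h0mem).1 i).1)).mp hsum0
      exact fun i => this i (Finset.mem_univ i)
    have hρtn : ∀ i, ρt (n:ℝ) i = 1 := by
      have hsumn : ∑ i, ρt (n:ℝ) i = (n:ℝ) := (hρt1 (n:ℝ) hnmem).2
      have hz : ∑ i : Fin n, (1 - ρt (n:ℝ) i) = 0 := by
        rw [Finset.sum_sub_distrib, hsumn]
        simp
      have := (Finset.sum_eq_zero_iff_of_nonneg
        (fun i _ => by linarith [((hIcc (n:ℝ) hnmem).1 i).2])).mp hz
      intro i
      have := this i (Finset.mem_univ i)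
      linarith
    -- intermediate value: find k₀ with ρt k₀ a + ρt k₀ b = ρ a + ρ b
    set G : ℝ → ℝ := fun k => ρt k a + ρt k b with hG
    have hGcont : ContinuousOn G (Set.Icc 0 (n:ℝ)) := ((hρt2 a).1).add ((hρt2 b).1)
    have hmemG : ρ a + ρ b ∈ Set.Icc (G 0) (G (n:ℝ)) := by
      simp only [hG, hρt0 a, hρt0 b, hρtn a, hρtn b]
      constructor
      · linarith [(hρ a).1, (hρ b).1]
      · linarith [(hρ a).2, (hρ b).2]
    obtain ⟨k₀, hk₀I, hGk₀⟩ := intermediate_value_Icc hn0 hGcont hmemG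
    have hGk₀' : ρt k₀ a + ρt k₀ b = ρ a + ρ b := hGk₀
    -- strict inequalities at k₀
    have hstrict : ρt k₀ a < ρ a ∧ ρ b < ρt k₀ b := by
      rcases lt_or_ge (ρt k₀ a) (ρ a) with h | h
      · exact ⟨h, by linarith⟩
      · exfalso
        have hble : ρt k₀ b ≤ ρ b := by linarith
        rcases eq_or_lt_of_le hble with heq | hlt
        · have haa : ρt k₀ a = ρ a := by linarith
          have he := (hIcc k₀ hk₀I).2 a b
          rw [haa, heq] at he
          have : c a b ρ = c b a ρ := by rw [hc, hc]; linarith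
          linarith
        · have := edf_chain (q b a) (q a b) (ρt k₀ b) (ρt k₀ a) (ρ b) (ρ a)
            (hq b a) (hq a b) ((hIcc k₀ hk₀I).2 b a)
            (((hIcc k₀ hk₀I).1 b).1) (((hIcc k₀ hk₀I).1 a).1)
            (((hIcc k₀ hk₀I).1 b).2) (((hIcc k₀ hk₀I).1 a).2)
            (hρ b).1 (hρ a).1 (hρ b).2 (hρ a).2
            (le_of_lt hlt) h
          rw [← hc, ← hc] at this
          linarith
    -- find a neighborhood where both strict inequalities hold
    have hwa : ContinuousWithinAt (fun k => ρt k a) (Set.Icc 0 (n:ℝ)) k₀ :=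
      ((hρt2 a).1).continuousWithinAt hk₀I
    have hwb : ContinuousWithinAt (fun k => ρt k b) (Set.Icc 0 (n:ℝ)) k₀ :=
      ((hρt2 b).1).continuousWithinAt hk₀I
    have hev1 : ∀ᶠ k in nhdsWithin k₀ (Set.Icc 0 (n:ℝ)), ρt k a < ρ a :=
      hwa.eventually_lt continuousWithinAt_const hstrict.1
    have hev2 : ∀ᶠ k in nhdsWithin k₀ (Set.Icc 0 (n:ℝ)), ρ b < ρt k b :=
      continuousWithinAt_const.eventually_lt hwb hstrict.2
    have hev := hev1.and hev2
    rw [Filter.eventually_iff, Metric.mem_nhdsWithin_iff] at hev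
    obtain ⟨ε, hεpos, hball⟩ := hev
    set lo : ℝ := max 0 (k₀ - ε/2) with hlo
    set hi : ℝ := min (n:ℝ) (k₀ + ε/2) with hhi
    have hlolt : lo < hi := by
      rw [hlo, hhi]
      apply max_lt <;> apply lt_min
      · exact_mod_cast Nat.cast_pos.mpr hn
      · linarith [hk₀I.1]
      · linarith [hk₀I.2]
      · linarith
    have hJsub : Set.Ioc lo hi ⊆ Metric.ball k₀ ε ∩ Set.Icc 0 (n:ℝ) := by
      intro k hk
      have h1 : lo < k := hk.1
      have h2 : k ≤ hi := hk.2
      have h3 : k₀ - ε/2 ≤ lo := le_max_right _ _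
      have h4 : (0:ℝ) ≤ lo := le_max_left _ _
      have h5 : hi ≤ (n:ℝ) := min_le_left _ _
      have h6 : hi ≤ k₀ + ε/2 := min_le_right _ _
      constructor
      · rw [Metric.mem_ball, Real.dist_eq, abs_lt]
        constructor <;> linarith
      · exact ⟨by linarith, by linarith⟩
    have hJprop : ∀ k ∈ Set.Ioc lo hi, ρt k a < ρ a ∧ ρ b < ρt k b :=
      fun k hk => hball (hJsub hk)
    have hJIcc : Set.Ioc lo hi ⊆ Set.Ioc 0 (n:ℝ) := by
      intro k hk
      have h4 : (0:ℝ) ≤ lo := le_max_left _ _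
      have h5 : hi ≤ (n:ℝ) := min_le_left _ _
      exact ⟨lt_of_le_of_lt h4 hk.1, le_trans hk.2 h5⟩
    -- dominate f by an indicator function
    set Gd : ℝ → ℝ := (Set.Ioc lo hi).indicator (fun _ => -δ) with hGd
    have hfGd : ∀ k ∈ Set.Ioc 0 (n:ℝ), f k ≤ Gd k := by
      intro k hk
      by_cases hkJ : k ∈ Set.Ioc lo hi
      · rw [hGd, Set.indicator_of_mem hkJ]
        -- f k ≤ the single (a,b) term, which equals -δ
        have hkIcc : k ∈ Set.Icc (0:ℝ) (n:ℝ) := Set.Ioc_subset_Icc_self hk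
        have hterm_ab : (((if ρt k a < ρ a then (1:ℝ) else 0)
            - (if ρt k b < ρ b then (1:ℝ) else 0)) * d a b) = -δ := by
          rw [if_pos (hJprop k hkJ).1, if_neg (not_lt.mpr (le_of_lt (hJprop k hkJ).2))]
          simp only [hd, hδ]
          ring
        set T : Fin n × Fin n → ℝ := fun p =>
            (((if ρt k p.1 < ρ p.1 then (1:ℝ) else 0)
            - (if ρt k p.2 < ρ p.2 then (1:ℝ) else 0)) * d p.1 p.2) with hT
        have hsum : f k = ∑ p ∈ (Finset.univ ×ˢ Finset.univ : Finset (Fin n × Fin n)), T p := by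
          rw [Finset.sum_product]
        have h' : ∑ p ∈ ({(a, b)} : Finset (Fin n × Fin n)), (-T p)
            ≤ ∑ p ∈ (Finset.univ ×ˢ Finset.univ : Finset (Fin n × Fin n)), (-T p) := by
          apply Finset.sum_le_sum_of_subset_of_nonneg (by simp)
          intro p _ _
          exact neg_nonneg.mpr (hterm k hkIcc p.1 p.2)
        rw [Finset.sum_singleton, Finset.sum_neg_distrib] at h'
        have hTab : T (a, b) = -δ := by
          simp only [hT]
          exact hterm_ab
        rw [hsum]
        linarith [h', hTab]
      · rw [hGd, Set.indicator_of_notMem hkJ]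
        exact hf_nonpos k (Set.Ioc_subset_Icc_self hk)
    have hGdint : IntegrableOn Gd (Set.Ioc 0 (n:ℝ)) volume := by
      rw [hGd, IntegrableOn, integrable_indicator_iff measurableSet_Ioc]
      apply (integrableOn_const_iff (C := -δ) (by finiteness)).mpr
      right
      calc (volume.restrict (Set.Ioc 0 (n:ℝ))) (Set.Ioc lo hi)
          ≤ volume (Set.Ioc lo hi) := Measure.restrict_le_self _
      _ < ⊤ := measure_Ioc_lt_top
    have hint_le : ∫ k in Set.Ioc (0:ℝ) (n:ℝ), f k ≤ ∫ k in Set.Ioc (0:ℝ) (n:ℝ), Gd k :=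
      setIntegral_mono_on hfint hGdint measurableSet_Ioc hfGd
    have hGdval : ∫ k in Set.Ioc (0:ℝ) (n:ℝ), Gd k = (hi - lo) * (-δ) := by
      rw [hGd, setIntegral_indicator measurableSet_Ioc,
        Set.inter_eq_self_of_subset_right hJIcc, setIntegral_const, Real.volume_real_Ioc,
        max_eq_left (by linarith), smul_eq_mul]
    have hFtlt : Ft < 0 := by
      rw [hFt, intervalIntegral.integral_of_le hn0]
      calc ∫ k in Set.Ioc (0:ℝ) (n:ℝ), f k ≤ (hi - lo) * (-δ) := by rw [← hGdval]; exact hint_le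
      _ < 0 := by nlinarith
    linarith [hFt0, hFtlt]
  · -- ρ ∈ Feq → Ft = 0
    intro hρF
    rw [hFeq] at hρF
    have hd0 : ∀ i j, d i j = 0 := by
      intro i j
      have := hρF.2 i j
      simp only [hd, hc]
      linarith
    have hf0 : f = fun _ => 0 := by
      funext k
      rw [hf]
      apply Finset.sum_eq_zero
      intro i _
      apply Finset.sum_eq_zero
      intro j _
      rw [hd0 i j, mul_zero]
    rw [hFt, hf0]
    simp
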